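/- Let f, g, h : ℝ → ℂ be continuous functions and set ω₀ = (g − i·f)/2, ω₁ = (g + i·f)/2, μ = −i·h. Let u, v : ℝ → ℂ be differentiable functions satisfying the Riccati equation θ' = ω₀ + μ·θ + ω₁·θ² (i.e., u' = ω₀ + μ·u + ω₁·u² and v' = ω₀ + μ·v + ω₁·v²), and assume u(x) − v(x) ≠ 0 for all x. Define α = (1 − u·v)/(u − v), β = i·(1 + u·v)/(u − v), γ = (u + v)/(u − v). Then α, β, γ satisfy the orthogonal system α' = h·β − g·γ, β' = −h·α + f·γ, γ' = g·α − f·β, and moreover α² + β² + γ² = 1 identically. -/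

import Mathlib

/-- Forward direction of Darboux's theorem on orthogonal systems (Theorem 2). -/
theorem darboux_orthogonal_forward
    (f g h u v α β γ : ℝ → ℂ)
    (hf : Continuous f) (hg : Continuous g) (hh : Continuous h)
    (hu : Differentiable ℝ u) (hv : Differentiable ℝ v)
    (hur : ∀ x, deriv u x = (g x - Complex.I * f x) / 2
        + (-Complex.I * h x) * u x + ((g x + Complex.I * f x) / 2) * u x ^ 2)
    (hvr : ∀ x, deriv v x = (g x - Complex.I * f x) / 2
        + (-Complex.I * h x) * v x + ((g x + Complex.I * f x) / 2) * v x ^ 2)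
    (huv : ∀ x, u x - v x ≠ 0)
    (hα : ∀ x, α x = (1 - u x * v x) / (u x - v x))
    (hβ : ∀ x, β x = Complex.I * (1 + u x * v x) / (u x - v x))
    (hγ : ∀ x, γ x = (u x + v x) / (u x - v x)) :
    (∀ x, deriv α x = h x * β x - g x * γ x) ∧
    (∀ x, deriv β x = -(h x) * α x + f x * γ x) ∧
    (∀ x, deriv γ x = g x * α x - f x * β x) ∧
    (∀ x, α x ^ 2 + β x ^ 2 + γ x ^ 2 = 1) := by
  have hαf : α = fun x => (1 - u x * v x) / (u x - v x) := funext hα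
  have hβf : β = fun x => Complex.I * (1 + u x * v x) / (u x - v x) := funext hβ
  have hγf : γ = fun x => (u x + v x) / (u x - v x) := funext hγ
  have hU : ∀ x, HasDerivAt u (deriv u x) x := fun x => (hu x).hasDerivAt
  have hV : ∀ x, HasDerivAt v (deriv v x) x := fun x => (hv x).hasDerivAt
  have hD : ∀ x, HasDerivAt (fun x => u x - v x) (deriv u x - deriv v x) x :=
    fun x => (hU x).sub (hV x)
  have hI : Complex.I ^ 2 = -1 := Complex.I_sq
  refine ⟨?_, ?_, ?_, ?_⟩
  · intro x
    have hN : HasDerivAt (fun x => 1 - u x * v x)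
        (0 - (deriv u x * v x + u x * deriv v x)) x :=
      (hasDerivAt_const x (1:ℂ)).sub ((hU x).mul (hV x))
    have : deriv (fun x => (1 - u x * v x) / (u x - v x)) x = _ := (hN.div (hD x) (huv x)).deriv
    rw [hαf, this, hβ, hγ, hur, hvr]
    field_simp [huv x]


    ring
  · intro x
    have hN : HasDerivAt (fun x => Complex.I * (1 + u x * v x))
        (Complex.I * (0 + (deriv u x * v x + u x * deriv v x))) x :=
      (((hasDerivAt_const x (1:ℂ)).add ((hU x).mul (hV x))).const_mul Complex.I)
    have : deriv (fun x => Complex.I * (1 + u x * v x) / (u x - v x)) x = _ := (hN.div (hD x) (huv x)).deriv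
    rw [hβf, this, hα, hγ, hur, hvr]
    field_simp [huv x]
    ring_nf
    rw [hI]

    ring
  · intro x
    have hN : HasDerivAt (fun x => u x + v x) (deriv u x + deriv v x) x :=
      (hU x).add (hV x)
    have : deriv (fun x => (u x + v x) / (u x - v x)) x = _ := (hN.div (hD x) (huv x)).deriv
    rw [hγf, this, hα, hβ, hur, hvr]
    field_simp [huv x]


    ring
  · intro x
    rw [hα, hβ, hγ]
    field_simp [huv x]
    ring_nf
    rw [hI]

    ring
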